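/- For N ≥ 2, let Σ_N be the set of N equidistributed unit vectors in ℝ² (i.e. v_j = (cos(2πj/N), sin(2πj/N)), 0 ≤ j < N), and define T_N^* f(x,y) := sup_{v∈Σ_N} |p.v. ∫_ℝ f((x,y)+tv) dt/t|. Then there is an absolute constant c > 0 such that the operator norm of T_N^* on L²(ℝ²) is at least c log N. -/

import Mathlib

noncomputable section
open MeasureTheory Filter Metric Set
open scoped ENNReal Real Topology

/-- The plane `ℝ²` with its Euclidean norm. -/
abbrev P2 : Type := EuclideanSpace ℝ (Fin 2)

/-- The vector `(a, b) ∈ ℝ²`. -/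
def vec2 (a b : ℝ) : P2 := (WithLp.equiv 2 (Fin 2 → ℝ)).symm ![a, b]

/-- The `j`-th of `N` equidistributed unit vectors:
`v_j = (cos(2πj/N), sin(2πj/N))`. -/
def dirN (N j : ℕ) : P2 :=
  vec2 (Real.cos (2 * Real.pi * j / N)) (Real.sin (2 * Real.pi * j / N))

/-- The principal value Hilbert transform of `f` along the direction `v` at `x`:
`p.v. ∫ f(x + tv) dt/t = lim_{ε→0⁺} ∫_{|t|>ε} f(x + tv) dt/t`. -/
def pvDir (f : P2 → ℝ) (v x : P2) : ℝ :=
  limUnder (𝓝[>] (0:ℝ)) (fun ε => ∫ t in {t : ℝ | ε < |t|}, f (x + t • v) / t)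

/-- The maximal directional Hilbert transform along `N` equidistributed directions. -/
def TstarEq (N : ℕ) (f : P2 → ℝ) (x : P2) : ℝ≥0∞ :=
  ⨆ j ∈ Finset.range N, ENNReal.ofReal |pvDir f (dirN N j) x|

set_option maxHeartbeats 1000000

lemma vec2_apply0 (a b : ℝ) : vec2 a b 0 = a := rfl
lemma vec2_apply1 (a b : ℝ) : vec2 a b 1 = b := rfl

lemma norm_sq_P2 (y : P2) : ‖y‖ ^ 2 = y 0 ^ 2 + y 1 ^ 2 := by
  rw [EuclideanSpace.norm_eq, Fin.sum_univ_two, Real.sq_sqrt (by positivity)]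
  simp [sq_abs]

lemma coord_le_norm (y : P2) (i : Fin 2) : |y i| ≤ ‖y‖ := by
  have h := norm_sq_P2 y
  have h2 : (y i)^2 ≤ ‖y‖^2 := by
    have : i = 0 ∨ i = 1 := by omega
    rcases this with rfl | rfl <;> nlinarith [sq_nonneg (y 0), sq_nonneg (y 1)]
  calc |y i| = Real.sqrt ((y i)^2) := (Real.sqrt_sq_eq_abs _).symm
  _ ≤ Real.sqrt (‖y‖^2) := Real.sqrt_le_sqrt h2
  _ = ‖y‖ := Real.sqrt_sq (norm_nonneg y)

lemma volume_ball_P2 (c : P2) (r : ℝ) :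
    volume (Metric.ball c r) = ENNReal.ofReal r ^ 2 * ENNReal.ofReal π := by
  rw [EuclideanSpace.volume_ball]
  simp only [Fintype.card_fin]
  rw [show ((2:ℕ):ℝ)/2 + 1 = 2 by norm_num, Real.Gamma_two, div_one, Real.sq_sqrt Real.pi_nonneg]

lemma integral_Ioo_one_div {a b : ℝ} (hab : a < b) (h : 0 < a ∨ b < 0) :
    ∫ t in Set.Ioo a b, 1 / t = Real.log |b| - Real.log |a| := by
  have ha0 : a ≠ 0 := by rcases h with h | h; exacts [h.ne', (hab.trans h).ne]
  have hb0 : b ≠ 0 := by rcases h with h | h; exacts [(h.trans hab).ne', h.ne]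
  have h0 : (0 : ℝ) ∉ Set.uIcc a b := by
    rw [Set.uIcc_of_le hab.le]
    intro ⟨h1, h2⟩
    rcases h with h | h <;> linarith
  rw [← MeasureTheory.integral_Ioc_eq_integral_Ioo, ← intervalIntegral.integral_of_le hab.le,
    integral_one_div h0, Real.log_div hb0 ha0, Real.log_abs, Real.log_abs]

lemma measurableSet_S (ε : ℝ) : MeasurableSet {t : ℝ | ε < |t|} :=
  measurableSet_lt measurable_const (measurable_id.abs)

lemma chord_integrable {c₁ c₂ ε : ℝ} (hε : 0 < ε) :
    IntegrableOn (fun t => (Set.Ioo c₁ c₂).indicator (fun u => 1 / u) t)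
      {t : ℝ | ε < |t|} volume := by
  have hS := measurableSet_S ε
  rw [IntegrableOn, integrable_indicator_iff measurableSet_Ioo, IntegrableOn,
    Measure.restrict_restrict measurableSet_Ioo]
  apply Measure.integrableOn_of_bounded (M := 1/ε)
  · exact ((measure_mono (Set.inter_subset_left)).trans_lt (by simp [Real.volume_Ioo])).ne
  · exact (measurable_const.div measurable_id).aestronglyMeasurable
  · refine MeasureTheory.ae_restrict_of_forall_mem (measurableSet_Ioo.inter hS) ?_
    intro t ht
    rw [Real.norm_eq_abs, abs_div, abs_one]
    exact one_div_le_one_div_of_le hε ht.2.le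

lemma chord_integral {c₁ c₂ ε : ℝ} (h12 : c₁ < c₂) (hε : 0 < ε) (h1 : ε < |c₁|) (h2 : ε < |c₂|) :
    ∫ t in {t : ℝ | ε < |t|}, (Set.Ioo c₁ c₂).indicator (fun u => 1 / u) t
      = Real.log |c₂| - Real.log |c₁| := by
  have hS := measurableSet_S ε
  rw [MeasureTheory.integral_indicator measurableSet_Ioo, Measure.restrict_restrict measurableSet_Ioo]
  rcases lt_trichotomy c₁ 0 with hc1 | hc1 | hc1
  · rcases lt_trichotomy c₂ 0 with hc2 | hc2 | hc2
    · -- both negative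
      have hsub : Set.Ioo c₁ c₂ ∩ {t : ℝ | ε < |t|} = Set.Ioo c₁ c₂ := by
        apply Set.inter_eq_left.2
        intro t ht
        have h2' : ε < -c₂ := by rwa [abs_of_neg hc2] at h2
        have : ε < -t := by linarith [ht.2]
        exact this.trans_le (neg_le_abs t)
      rw [hsub]
      exact integral_Ioo_one_div h12 (Or.inr hc2)
    · exfalso; rw [hc2, abs_zero] at h2; linarith
    · -- straddling
      have habs1 : |c₁| = -c₁ := abs_of_neg hc1
      have habs2 : |c₂| = c₂ := abs_of_pos hc2
      have hsplit : Set.Ioo c₁ c₂ ∩ {t : ℝ | ε < |t|} = Set.Ioo c₁ (-ε) ∪ Set.Ioo ε c₂ := by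
        ext t
        simp only [Set.mem_inter_iff, Set.mem_Ioo, Set.mem_setOf_eq, Set.mem_union]
        constructor
        · rintro ⟨⟨ht1, ht2⟩, habs⟩
          rcases lt_abs.mp habs with h | h
          · exact Or.inr ⟨h, ht2⟩
          · exact Or.inl ⟨ht1, by linarith⟩
        · rintro (⟨ht1, ht2⟩ | ⟨ht1, ht2⟩)
          · refine ⟨⟨ht1, by linarith⟩, ?_⟩
            rw [abs_of_neg (by linarith)]; linarith
          · refine ⟨⟨by linarith, ht2⟩, ?_⟩
            rw [abs_of_pos (by linarith)]; linarith
      rw [hsplit, MeasureTheory.setIntegral_union]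
      · rw [integral_Ioo_one_div (by rw [habs1] at h1; linarith) (Or.inr (by linarith)),
          integral_Ioo_one_div (by rw [habs2] at h2; linarith) (Or.inl hε)]
        rw [abs_of_neg (by linarith : (-ε:ℝ) < 0), abs_of_pos hε, neg_neg]
        ring
      · refine Set.disjoint_left.2 fun t ht ht' => ?_
        have := ht.2; have := ht'.1; linarith
      · exact measurableSet_Ioo
      · refine ContinuousOn.integrableOn_Icc ?_ |>.mono_set Set.Ioo_subset_Icc_self
        apply ContinuousOn.div continuousOn_const continuousOn_id
        intro t ht
        simp only [id_eq]; intro h0; subst h0; linarith [ht.2]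
      · refine ContinuousOn.integrableOn_Icc ?_ |>.mono_set Set.Ioo_subset_Icc_self
        apply ContinuousOn.div continuousOn_const continuousOn_id
        intro t ht
        simp only [id_eq]; intro h0; subst h0; linarith [ht.1]
  · exfalso; rw [hc1, abs_zero] at h1; linarith
  · -- both positive
    have hsub : Set.Ioo c₁ c₂ ∩ {t : ℝ | ε < |t|} = Set.Ioo c₁ c₂ := by
      apply Set.inter_eq_left.2
      intro t ht
      have : |c₁| = c₁ := abs_of_pos hc1
      have : ε < t := by rw [this] at h1; linarith [ht.1]
      exact lt_of_lt_of_le this (le_abs_self _)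
    rw [hsub]
    exact integral_Ioo_one_div h12 (Or.inl hc1)

def multiBall (L : ℕ) : P2 → ℝ := fun y =>
  ∑ k ∈ Finset.range (L+1), (2:ℝ)⁻¹^k * (Metric.ball (0:P2) (2^k)).indicator (fun _ => (1:ℝ)) y

lemma four_pow_eq (k : ℕ) : ((2:ℝ)^k)^2 = 4^k := by
  rw [← pow_mul, show (4:ℝ) = 2^2 by norm_num, ← pow_mul, Nat.mul_comm]

lemma sq_sub_nonneg {Q : ℝ} (hQ0 : 0 ≤ Q) (hQ : Q ≤ 4⁻¹) (k : ℕ) : (0:ℝ) < 4^k - Q := by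
  have h1 : (1:ℝ) ≤ 4^k := one_le_pow₀ (by norm_num : (1:ℝ) ≤ 4)
  linarith

lemma pvDir_multiBall (L : ℕ) (C : ℝ) (v x : P2) (P Q : ℝ)
    (hP : 0 < P) (hQ0 : 0 ≤ Q) (hQ : Q ≤ 4⁻¹)
    (hnorm : ∀ t : ℝ, ‖x + t • v‖^2 = (t+P)^2 + Q)
    (hs : ∀ k, k ≤ L → Real.sqrt (4^k - Q) ≠ P) :
    pvDir (fun y => C * multiBall L y) v x
      = C * ∑ k ∈ Finset.range (L+1), (2:ℝ)⁻¹^k *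
          (Real.log |Real.sqrt (4^k - Q) - P| - Real.log (Real.sqrt (4^k - Q) + P)) := by
  set s : ℕ → ℝ := fun k => Real.sqrt (4^k - Q) with hs_def
  have hspos : ∀ k, 0 < s k := fun k => Real.sqrt_pos.2 (sq_sub_nonneg hQ0 hQ k)
  have hsq : ∀ k, (s k)^2 = 4^k - Q := fun k => Real.sq_sqrt (sq_sub_nonneg hQ0 hQ k).le
  -- membership
  have hmem : ∀ (k : ℕ) (t : ℝ),
      x + t • v ∈ Metric.ball (0:P2) (2^k) ↔ t ∈ Set.Ioo (-P - s k) (-P + s k) := by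
    intro k t
    rw [Metric.mem_ball, dist_eq_norm, sub_zero]
    constructor
    · intro h
      have h2 : ‖x + t • v‖^2 < ((2:ℝ)^k)^2 := by
        rw [sq_lt_sq, abs_of_nonneg (norm_nonneg _), abs_of_nonneg (by positivity)]
        exact h
      rw [hnorm, four_pow_eq] at h2
      have h3 : (t+P)^2 < (s k)^2 := by rw [hsq]; linarith
      have h4 : |t+P| < s k := by
        have := abs_lt_of_sq_lt_sq h3 (hspos k).le
        exact this
      rw [abs_lt] at h4
      exact ⟨by linarith [h4.1], by linarith [h4.2]⟩
    · intro ⟨h1, h2⟩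
      have h4 : (t+P)^2 < (s k)^2 := sq_lt_sq' (by linarith) (by linarith)
      rw [hsq] at h4
      have h2' : ‖x + t • v‖^2 < ((2:ℝ)^k)^2 := by rw [hnorm, four_pow_eq]; linarith
      have := abs_lt_of_sq_lt_sq h2' (by positivity)
      rwa [abs_of_nonneg (norm_nonneg _)] at this
  -- integrand identity
  have hind : ∀ t : ℝ, (fun y => C * multiBall L y) (x + t • v) / t
      = ∑ k ∈ Finset.range (L+1), (C * (2:ℝ)⁻¹^k) *
          (Set.Ioo (-P - s k) (-P + s k)).indicator (fun u => 1/u) t := by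
    intro t
    simp only [multiBall]
    rw [Finset.mul_sum, Finset.sum_div]
    apply Finset.sum_congr rfl
    intro k _
    by_cases h : t ∈ Set.Ioo (-P - s k) (-P + s k)
    · rw [Set.indicator_of_mem h, Set.indicator_of_mem ((hmem k t).2 h)]
      ring
    · rw [Set.indicator_of_notMem h, Set.indicator_of_notMem (fun hm => h ((hmem k t).1 hm))]
      simp
  -- epsilon threshold
  have hne : (Finset.range (L+1)).Nonempty := ⟨0, by simp⟩
  set ε₀ : ℝ := min P ((Finset.range (L+1)).inf' hne fun k => |s k - P|) with hε₀def
  have hε₀ : 0 < ε₀ := by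
    apply lt_min hP
    rw [Finset.lt_inf'_iff]
    intro k hk
    exact abs_pos.2 (sub_ne_zero.2 (hs k (Nat.lt_succ_iff.mp (Finset.mem_range.mp hk))))
  set V : ℝ := C * ∑ k ∈ Finset.range (L+1), (2:ℝ)⁻¹^k *
      (Real.log |s k - P| - Real.log (s k + P)) with hVdef
  have key : ∀ ε ∈ Set.Ioo (0:ℝ) ε₀,
      (∫ t in {t : ℝ | ε < |t|}, (fun y => C * multiBall L y) (x + t • v) / t) = V := by
    intro ε ⟨hε1, hε2⟩
    have hint : ∀ k ∈ Finset.range (L+1), Integrable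
        (fun t => (C * (2:ℝ)⁻¹^k) * (Set.Ioo (-P - s k) (-P + s k)).indicator (fun u => 1/u) t)
        (volume.restrict {t : ℝ | ε < |t|}) :=
      fun k _ => (chord_integrable hε1).const_mul _
    calc (∫ t in {t : ℝ | ε < |t|}, (fun y => C * multiBall L y) (x + t • v) / t)
        = ∫ t in {t : ℝ | ε < |t|}, ∑ k ∈ Finset.range (L+1), (C * (2:ℝ)⁻¹^k) *
            (Set.Ioo (-P - s k) (-P + s k)).indicator (fun u => 1/u) t := by
          apply MeasureTheory.integral_congr_ae
          exact Eventually.of_forall (fun t => hind t)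
      _ = ∑ k ∈ Finset.range (L+1), ∫ t in {t : ℝ | ε < |t|}, (C * (2:ℝ)⁻¹^k) *
            (Set.Ioo (-P - s k) (-P + s k)).indicator (fun u => 1/u) t :=
          MeasureTheory.integral_finset_sum _ hint
      _ = V := by
          rw [hVdef, Finset.mul_sum]
          apply Finset.sum_congr rfl
          intro k hk
          have hk' : k ≤ L := Nat.lt_succ_iff.mp (Finset.mem_range.mp hk)
          have hc12 : -P - s k < -P + s k := by linarith [hspos k]
          have habs1 : |(-P - s k)| = s k + P := by
            rw [abs_of_neg (by linarith [hspos k])]; ring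
          have habs2 : |(-P + s k)| = |s k - P| := by congr 1; ring
          have h1 : ε < |(-P - s k)| := by
            rw [habs1]
            have : ε₀ ≤ P := min_le_left _ _
            linarith [hspos k]
          have h2 : ε < |(-P + s k)| := by
            rw [habs2]
            calc ε < ε₀ := hε2
            _ ≤ |s k - P| := (min_le_right _ _).trans (Finset.inf'_le _ hk)
          rw [MeasureTheory.integral_const_mul, chord_integral hc12 hε1 h1 h2, habs2, habs1]
          ring
  have htend : Tendsto (fun ε => ∫ t in {t : ℝ | ε < |t|},
      (fun y => C * multiBall L y) (x + t • v) / t) (𝓝[>] (0:ℝ)) (𝓝 V) := by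
    apply Tendsto.congr' _ (tendsto_const_nhds (x := V))
    filter_upwards [Ioo_mem_nhdsGT_of_mem (⟨le_refl 0, hε₀⟩ : (0:ℝ) ∈ Set.Ico 0 ε₀)] with ε hε
    exact (key ε hε).symm
  exact htend.limUnder_eq

def Sh : ℕ → Set P2
  | 0 => Metric.ball 0 1
  | (i+1) => Metric.ball 0 (2^(i+1)) \ Metric.ball 0 (2^i)

lemma Sh_measurable (i : ℕ) : MeasurableSet (Sh i) := by
  cases i with
  | zero => exact measurableSet_ball
  | succ j => exact measurableSet_ball.diff measurableSet_ball

lemma Sh_subset (i : ℕ) : Sh i ⊆ Metric.ball (0:P2) (2^i) := by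
  cases i with
  | zero => simp [Sh]
  | succ j => exact Set.diff_subset

lemma multiBall_nonneg (L : ℕ) (y : P2) : 0 ≤ multiBall L y := by
  apply Finset.sum_nonneg
  intro k _
  apply mul_nonneg (by positivity)
  exact Set.indicator_nonneg (fun _ _ => zero_le_one) y

lemma multiBall_sq_le (L : ℕ) (y : P2) :
    (ENNReal.ofReal (multiBall L y))^2
      ≤ ∑ i ∈ Finset.range (L+1), (Sh i).indicator (fun _ => ENNReal.ofReal (4 * (4:ℝ)⁻¹^i)) y := by
  classical
  by_cases hy : y ∈ Metric.ball (0:P2) (2^L)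
  · have hex : ∃ n : ℕ, y ∈ Metric.ball (0:P2) (2^n) := ⟨L, hy⟩
    set i := Nat.find hex with hidef
    have hfind : y ∈ Metric.ball (0:P2) (2^i) := Nat.find_spec hex
    have hiL : i ≤ L := Nat.find_min' _ hy
    have hnot : ∀ k < i, y ∉ Metric.ball (0:P2) (2^k) := fun k hk => Nat.find_min _ hk
    have hySh : y ∈ Sh i := by
      cases hi : i with
      | zero => rw [hi] at hfind; simpa [Sh] using hfind
      | succ j =>
        rw [hi] at hfind
        exact ⟨hfind, hnot j (by omega)⟩
    -- multiBall value bound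
    have hval : multiBall L y ≤ (2:ℝ)⁻¹^i * 2 := by
      have hzero : ∀ k ∈ Finset.Ico 0 i, (2:ℝ)⁻¹^k * (Metric.ball (0:P2) (2^k)).indicator (fun _ => (1:ℝ)) y = 0 := by
        intro k hk
        rw [Set.indicator_of_notMem (hnot k (Finset.mem_Ico.mp hk).2), mul_zero]
      have hsplit : multiBall L y = ∑ k ∈ Finset.Ico i (L+1),
          (2:ℝ)⁻¹^k * (Metric.ball (0:P2) (2^k)).indicator (fun _ => (1:ℝ)) y := by
        rw [multiBall, Finset.range_eq_Ico,
          ← Finset.sum_Ico_consecutive _ (Nat.zero_le i) (by omega : i ≤ L+1),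
          Finset.sum_eq_zero hzero, zero_add]
      rw [hsplit]
      calc ∑ k ∈ Finset.Ico i (L+1), (2:ℝ)⁻¹^k * (Metric.ball (0:P2) (2^k)).indicator (fun _ => (1:ℝ)) y
          ≤ ∑ k ∈ Finset.Ico i (L+1), (2:ℝ)⁻¹^k := by
            apply Finset.sum_le_sum
            intro k _
            have : (Metric.ball (0:P2) (2^k)).indicator (fun _ => (1:ℝ)) y ≤ 1 :=
              Set.indicator_le_self' (fun _ _ => zero_le_one) y |>.trans (le_refl _) |>.trans (by
                by_cases h : y ∈ Metric.ball (0:P2) (2^k) <;> simp [h])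
            nlinarith [pow_nonneg (by norm_num : (0:ℝ) ≤ 2⁻¹) k,
              Set.indicator_nonneg (fun (_:P2) _ => (zero_le_one (α := ℝ))) y (s := Metric.ball (0:P2) (2^k)) (f := fun _ => (1:ℝ))]
        _ = ∑ j ∈ Finset.range (L+1-i), (2:ℝ)⁻¹^(i+j) := by
            rw [Finset.sum_Ico_eq_sum_range]
        _ = (2:ℝ)⁻¹^i * ∑ j ∈ Finset.range (L+1-i), (2:ℝ)⁻¹^j := by
            rw [Finset.mul_sum]
            exact Finset.sum_congr rfl fun j _ => pow_add 2⁻¹ i j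
        _ ≤ (2:ℝ)⁻¹^i * 2 := by
            apply mul_le_mul_of_nonneg_left _ (by positivity)
            simpa [one_div] using sum_geometric_two_le (L+1-i)
    have hmb : (ENNReal.ofReal (multiBall L y))^2 ≤ ENNReal.ofReal (4 * (4:ℝ)⁻¹^i) := by
      calc (ENNReal.ofReal (multiBall L y))^2
          ≤ (ENNReal.ofReal ((2:ℝ)⁻¹^i * 2))^2 := by
            exact pow_le_pow_left' (ENNReal.ofReal_le_ofReal hval) 2
        _ = ENNReal.ofReal (((2:ℝ)⁻¹^i * 2)^2) := by
            rw [← ENNReal.ofReal_pow (by positivity)]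
        _ = ENNReal.ofReal (4 * (4:ℝ)⁻¹^i) := by
            congr 1
            rw [mul_pow, ← pow_mul]
            rw [show (4:ℝ)⁻¹ = 2⁻¹^2 by norm_num, ← pow_mul]
            ring
    calc (ENNReal.ofReal (multiBall L y))^2 ≤ ENNReal.ofReal (4 * (4:ℝ)⁻¹^i) := hmb
      _ = (Sh i).indicator (fun _ => ENNReal.ofReal (4 * (4:ℝ)⁻¹^i)) y := by
          rw [Set.indicator_of_mem hySh]
      _ ≤ _ := Finset.single_le_sum (f := fun i => (Sh i).indicator (fun _ => ENNReal.ofReal (4 * (4:ℝ)⁻¹^i)) y)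
            (fun _ _ => zero_le) (Finset.mem_range.mpr (by omega))
  · have : multiBall L y = 0 := by
      apply Finset.sum_eq_zero
      intro k hk
      have hk' : k ≤ L := Nat.lt_succ_iff.mp (Finset.mem_range.mp hk)
      have : y ∉ Metric.ball (0:P2) (2^k) := fun h =>
        hy (Metric.ball_subset_ball (by
          have := pow_le_pow_right₀ (by norm_num : (1:ℝ) ≤ 2) hk'
          exact this) h)
      rw [Set.indicator_of_notMem this, mul_zero]
    rw [this]
    simp

lemma lintegral_multiBall_sq_le (L : ℕ) :
    (∫⁻ y : P2, (ENNReal.ofReal (multiBall L y))^2 ∂volume) ≤ ENNReal.ofReal (16 * (L+1)) := by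
  calc (∫⁻ y : P2, (ENNReal.ofReal (multiBall L y))^2 ∂volume)
      ≤ ∫⁻ y : P2, ∑ i ∈ Finset.range (L+1),
          (Sh i).indicator (fun _ => ENNReal.ofReal (4 * (4:ℝ)⁻¹^i)) y ∂volume :=
        lintegral_mono (multiBall_sq_le L)
    _ = ∑ i ∈ Finset.range (L+1), ∫⁻ y : P2,
          (Sh i).indicator (fun _ => ENNReal.ofReal (4 * (4:ℝ)⁻¹^i)) y ∂volume := by
        apply lintegral_finset_sum
        intro i _
        exact measurable_const.indicator (Sh_measurable i)
    _ = ∑ i ∈ Finset.range (L+1), ENNReal.ofReal (4 * (4:ℝ)⁻¹^i) * volume (Sh i) := by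
        exact Finset.sum_congr rfl fun i _ => lintegral_indicator_const (Sh_measurable i) _
    _ ≤ ∑ i ∈ Finset.range (L+1), ENNReal.ofReal (16:ℝ) := by
        apply Finset.sum_le_sum
        intro i _
        calc ENNReal.ofReal (4 * (4:ℝ)⁻¹^i) * volume (Sh i)
            ≤ ENNReal.ofReal (4 * (4:ℝ)⁻¹^i) * volume (Metric.ball (0:P2) (2^i)) :=
              mul_le_mul_right (measure_mono (Sh_subset i)) _
          _ = ENNReal.ofReal (4 * (4:ℝ)⁻¹^i) * (ENNReal.ofReal ((2:ℝ)^i) ^ 2 * ENNReal.ofReal π) := by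
              rw [volume_ball_P2]
          _ = ENNReal.ofReal (4 * (4:ℝ)⁻¹^i * (((2:ℝ)^i)^2 * π)) := by
              rw [← ENNReal.ofReal_pow (by positivity), ← ENNReal.ofReal_mul (by positivity),
                ← ENNReal.ofReal_mul (by positivity)]
          _ ≤ ENNReal.ofReal (16:ℝ) := by
              apply ENNReal.ofReal_le_ofReal
              have h1 : ((2:ℝ)^i)^2 = 4^i := by
                rw [← pow_mul, show (4:ℝ) = 2^2 by norm_num, ← pow_mul, Nat.mul_comm]
              rw [h1]
              have h2 : (4:ℝ)⁻¹^i * 4^i = 1 := by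
                rw [← mul_pow]; norm_num
              have hπ := Real.pi_le_four
              have hπ0 := Real.pi_nonneg
              calc 4 * (4:ℝ)⁻¹^i * (4^i * π) = 4 * π * ((4:ℝ)⁻¹^i * 4^i) := by ring
                _ = 4 * π := by rw [h2, mul_one]
                _ ≤ 16 := by linarith
    _ = ((L+1) : ℕ) * ENNReal.ofReal (16:ℝ) := by
        rw [Finset.sum_const, Finset.card_range, nsmul_eq_mul]
    _ = ENNReal.ofReal (16 * (L+1)) := by
        rw [ENNReal.ofReal_mul (by norm_num), ← ENNReal.ofReal_natCast (L+1), mul_comm]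
        norm_num

lemma memℒp_multiBall (L : ℕ) (c : ℝ) : MemLp (fun y => c * multiBall L y) 2 volume := by
  apply MemLp.const_mul
  apply memLp_finset_sum
  intro k _
  apply MemLp.const_mul
  exact memLp_indicator_const 2 measurableSet_ball (1:ℝ) (Or.inr measure_ball_lt_top.ne)

lemma eLpNorm_multiBall (L : ℕ) :
    eLpNorm (fun y => (Real.sqrt (16*(L+1)))⁻¹ * multiBall L y) 2 volume ≤ 1 := by
  have hD : (0:ℝ) < Real.sqrt (16*(L+1)) := Real.sqrt_pos.2 (by positivity)
  have hsmul : (fun y => (Real.sqrt (16*(L+1)))⁻¹ * multiBall L y)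
      = (Real.sqrt (16*(L+1)))⁻¹ • (multiBall L) := rfl
  rw [hsmul, eLpNorm_const_smul]
  have h1 : eLpNorm (multiBall L) 2 volume ≤ ENNReal.ofReal (Real.sqrt (16*(L+1))) := by
    rw [eLpNorm_eq_lintegral_rpow_enorm_toReal two_ne_zero ENNReal.ofNat_ne_top]
    have htr : (2:ℝ≥0∞).toReal = (2:ℝ) := by norm_num
    rw [htr]
    have heq : ∀ y : P2, ((‖multiBall L y‖₊ : ℝ≥0∞)) ^ (2:ℝ)
        = (ENNReal.ofReal (multiBall L y))^2 := by
      intro y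
      rw [← enorm_eq_nnnorm, Real.enorm_eq_ofReal (multiBall_nonneg L y), ENNReal.rpow_two]
    calc (∫⁻ y, ((‖multiBall L y‖₊ : ℝ≥0∞)) ^ (2:ℝ) ∂volume) ^ (1/(2:ℝ))
        = (∫⁻ y, (ENNReal.ofReal (multiBall L y))^2 ∂volume) ^ (1/(2:ℝ)) := by
          congr 1; exact lintegral_congr heq
      _ ≤ (ENNReal.ofReal (16*(L+1))) ^ (1/(2:ℝ)) :=
          ENNReal.rpow_le_rpow (lintegral_multiBall_sq_le L) (by norm_num)
      _ = ENNReal.ofReal ((16*(L+1):ℝ) ^ (1/(2:ℝ))) :=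
          ENNReal.ofReal_rpow_of_nonneg (by positivity) (by norm_num)
      _ = ENNReal.ofReal (Real.sqrt (16*(L+1))) := by
          rw [Real.sqrt_eq_rpow]

  calc (‖(Real.sqrt (16*(L+1)))⁻¹‖₊ : ℝ≥0∞) * eLpNorm (multiBall L) 2 volume
      ≤ (‖(Real.sqrt (16*(L+1)))⁻¹‖₊ : ℝ≥0∞) * ENNReal.ofReal (Real.sqrt (16*(L+1))) :=
        mul_le_mul_right h1 _
    _ = 1 := by
        rw [← enorm_eq_nnnorm, Real.enorm_eq_ofReal (by positivity),
          ← ENNReal.ofReal_mul (by positivity), inv_mul_cancel₀ hD.ne']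
        simp

lemma log_ratio_ge {P s : ℝ} (hs : 0 < s) (hsP : s < P) :
    2*s/(P+s) ≤ Real.log (P+s) - Real.log (P-s) := by
  have h1 : 0 < P - s := by linarith
  have h2 : 0 < P + s := by linarith
  have h3 := Real.log_le_sub_one_of_pos (show 0 < (P-s)/(P+s) by positivity)
  rw [Real.log_div h1.ne' h2.ne'] at h3
  have h4 : (P-s)/(P+s) - 1 = -(2*s/(P+s)) := by field_simp; ring
  rw [h4] at h3
  linarith

lemma sum_log_bound (L m : ℕ) (P Q : ℝ) (hm : 1 ≤ m) (hmL : m ≤ L)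
    (hQ0 : 0 ≤ Q) (hQ : Q ≤ 4⁻¹)
    (hsP : ∀ k, k ≤ L → Real.sqrt (4^k - Q) ≠ P)
    (hP1 : (141/100) * 2^m ≤ P) (hP2 : P ≤ (146/100) * 2^m) :
    (m : ℝ) / (3 * 2^m) ≤ |∑ k ∈ Finset.range (L+1), (2:ℝ)⁻¹^k *
        (Real.log |Real.sqrt (4^k - Q) - P| - Real.log (Real.sqrt (4^k - Q) + P))| := by
  set s : ℕ → ℝ := fun k => Real.sqrt (4^k - Q) with hsdef
  have hsub : ∀ k : ℕ, (0:ℝ) < 4^k - Q := by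
    intro k
    have h1 : (1:ℝ) ≤ 4^k := one_le_pow₀ (by norm_num)
    linarith
  have hspos : ∀ k, 0 < s k := fun k => Real.sqrt_pos.2 (hsub k)
  have hsle : ∀ k, s k ≤ 2^k := by
    intro k
    calc s k ≤ Real.sqrt (4^k) := Real.sqrt_le_sqrt (by linarith)
    _ = Real.sqrt (((2:ℝ)^k)^2) := by
        congr 1
        rw [← pow_mul, show (4:ℝ) = 2^2 by norm_num, ← pow_mul, Nat.mul_comm]
    _ = 2^k := Real.sqrt_sq (by positivity)
  have hsge : ∀ k, (2:ℝ)^k - 1 ≤ s k := by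
    intro k
    have h2 : (1:ℝ) ≤ 2^k := one_le_pow₀ (by norm_num)
    rw [hsdef]
    rw [show (fun k => Real.sqrt (4^k - Q)) k = Real.sqrt (4^k - Q) from rfl,
      Real.le_sqrt (by linarith) (hsub k).le]
    have h4 : ((2:ℝ)^k)^2 = 4^k := by
      rw [← pow_mul, show (4:ℝ) = 2^2 by norm_num, ← pow_mul, Nat.mul_comm]
    nlinarith
  have hPpos : (0:ℝ) < P := lt_of_lt_of_le (by positivity) hP1
  set w : ℕ → ℝ := fun k => (2:ℝ)⁻¹^k *
      (Real.log |s k - P| - Real.log (s k + P)) with hwdef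
  have hwneg : ∀ k ∈ Finset.range (L+1), w k ≤ 0 := by
    intro k hk
    have hk' : k ≤ L := Nat.lt_succ_iff.mp (Finset.mem_range.mp hk)
    apply mul_nonpos_of_nonneg_of_nonpos (by positivity)
    have habs : (0:ℝ) < |s k - P| := abs_pos.2 (sub_ne_zero.2 (hsP k hk'))
    have h5 : |s k - P| ≤ s k + P := by
      have := abs_sub_abs_le_abs_sub (s k) P
      rw [abs_le]
      constructor <;> [skip; skip] <;>
        · cases abs_cases (s k - P) with
          | inl h => nlinarith [hspos k, hPpos]
          | inr h => nlinarith [hspos k, hPpos]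
    linarith [Real.log_le_log habs h5]
  have habs_sum : |∑ k ∈ Finset.range (L+1), w k| = ∑ k ∈ Finset.range (L+1), -(w k) := by
    rw [abs_of_nonpos (Finset.sum_nonpos hwneg), ← Finset.sum_neg_distrib]
  rw [habs_sum]
  have hsubset : Finset.Icc 1 m ⊆ Finset.range (L+1) := by
    intro k hk
    rw [Finset.mem_Icc] at hk
    rw [Finset.mem_range]
    omega
  have hstep : ∑ k ∈ Finset.Icc 1 m, -(w k) ≤ ∑ k ∈ Finset.range (L+1), -(w k) := by
    apply Finset.sum_le_sum_of_subset_of_nonneg hsubset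
    intro k hk _
    linarith [hwneg k hk]
  refine le_trans ?_ hstep
  have hperk : ∀ k ∈ Finset.Icc 1 m, 1/(3 * (2:ℝ)^m) ≤ -(w k) := by
    intro k hk
    rw [Finset.mem_Icc] at hk
    obtain ⟨hk1, hk2⟩ := hk
    have hABle : (2:ℝ)^k ≤ 2^m := pow_le_pow_right₀ (by norm_num) hk2
    have hsP' : s k < P := by
      calc s k ≤ 2^k := hsle k
      _ ≤ 2^m := hABle
      _ < P := by nlinarith [pow_pos (show (0:ℝ)<2 by norm_num) m]
    have habs2 : |s k - P| = P - s k := by rw [abs_of_neg (by linarith)]; ring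
    have hlogr := log_ratio_ge (hspos k) hsP'
    have hw : -(w k) = (2:ℝ)⁻¹^k * (Real.log (P + s k) - Real.log (P - s k)) := by
      rw [hwdef]
      simp only
      rw [habs2, show s k + P = P + s k by ring]
      ring
    rw [hw]
    have hA2 : (2:ℝ) ≤ 2^k := by
      calc (2:ℝ) = 2^1 := by norm_num
      _ ≤ 2^k := pow_le_pow_right₀ (by norm_num) hk1
    have hkey : 1/(3 * (2:ℝ)^m) ≤ (2:ℝ)⁻¹^k * (2 * s k/(P + s k)) := by
      rw [inv_pow, inv_mul_eq_div, div_div]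
      rw [div_le_div_iff₀ (by positivity) (by positivity)]
      have h1 : P + s k ≤ (246/100) * 2^m := by
        have := hsle k
        nlinarith
      nlinarith [hspos k, hsge k, pow_pos (show (0:ℝ)<2 by norm_num) m,
        pow_pos (show (0:ℝ)<2 by norm_num) k,
        mul_le_mul_of_nonneg_left h1 (le_of_lt (pow_pos (show (0:ℝ)<2 by norm_num) k)),
        mul_le_mul_of_nonneg_right (hsge k) (le_of_lt (pow_pos (show (0:ℝ)<2 by norm_num) m))]
    calc 1/(3 * (2:ℝ)^m) ≤ (2:ℝ)⁻¹^k * (2 * s k/(P + s k)) := hkey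
    _ ≤ (2:ℝ)⁻¹^k * (Real.log (P + s k) - Real.log (P - s k)) :=
        mul_le_mul_of_nonneg_left hlogr (by positivity)
  have hcard : (Finset.Icc 1 m).card = m := by rw [Nat.card_Icc]; omega
  calc (m:ℝ)/(3 * 2^m) = (Finset.Icc 1 m).card • (1/(3 * (2:ℝ)^m)) := by rw [hcard, nsmul_eq_mul]; ring
    _ = ∑ _k ∈ Finset.Icc 1 m, 1/(3 * (2:ℝ)^m) := (Finset.sum_const _).symm
    _ ≤ ∑ k ∈ Finset.Icc 1 m, -(w k) := Finset.sum_le_sum hperk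

lemma polar_P2 (x : P2) (hx : x ≠ 0) :
    ∃ θ : ℝ, θ ∈ Set.Ioc (-π) π ∧ x 0 = ‖x‖ * Real.cos θ ∧ x 1 = ‖x‖ * Real.sin θ := by
  set z : ℂ := ⟨x 0, x 1⟩ with hz
  have hnx : ‖x‖ ≠ 0 := norm_ne_zero_iff.2 hx
  have hz0 : z ≠ 0 := by
    intro h
    have h0 : x 0 = 0 := congrArg Complex.re h
    have h1 : x 1 = 0 := congrArg Complex.im h
    apply hnx
    have : ‖x‖^2 = 0 := by rw [norm_sq_P2, h0, h1]; ring
    nlinarith [norm_nonneg x]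
  have habs : ‖z‖ = ‖x‖ := by
    rw [Complex.norm_def, Complex.normSq_mk]
    rw [show ‖x‖ = Real.sqrt (‖x‖^2) from (Real.sqrt_sq (norm_nonneg x)).symm, norm_sq_P2]
    ring_nf
  refine ⟨Complex.arg z, Complex.arg_mem_Ioc z, ?_, ?_⟩
  · have h := Complex.cos_arg hz0
    rw [habs] at h
    have : z.re = x 0 := rfl
    rw [this] at h
    field_simp at h
    linarith [h]
  · have h := Complex.sin_arg z
    rw [habs] at h
    have : z.im = x 1 := rfl
    rw [this] at h
    field_simp at h
    linarith [h]

lemma exists_close_dir (N : ℕ) (hN : 2 ≤ N) (θ : ℝ) (hθ : θ ∈ Set.Ioc (-π) π) :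
    ∃ j : ℕ, j < N ∧ ∃ β : ℝ, |θ - β| ≤ π / N ∧
      Real.cos (2 * π * j / N) = Real.cos β ∧ Real.sin (2 * π * j / N) = Real.sin β := by
  have hNR : (2:ℝ) ≤ N := by exact_mod_cast hN
  have hN0 : (0:ℝ) < N := by linarith
  have hπ := Real.pi_pos
  set u := θ * N / (2 * π) with hudef
  set mz := round u with hmzdef
  have hround : |u - mz| ≤ 1/2 := abs_sub_round u
  set β := 2 * π * mz / N with hβdef
  have hβ : |θ - β| ≤ π / N := by
    have hθβ : θ - β = (2*π/N) * (u - mz) := by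
      rw [hβdef, hudef]; field_simp
    rw [hθβ, abs_mul, abs_of_pos (by positivity : (0:ℝ) < 2*π/N)]
    calc (2*π/N) * |u - mz| ≤ (2*π/N) * (1/2) :=
      mul_le_mul_of_nonneg_left hround (by positivity)
    _ = π/N := by ring
  have hu1 : u ≤ N/2 := by
    rw [hudef, div_le_iff₀ (by positivity)]
    nlinarith [hθ.2]
  have hu2 : -(N/2) < u := by
    rw [hudef, lt_div_iff₀ (by positivity)]
    nlinarith [hθ.1]
  have hm1 : (mz:ℝ) < N := by
    have h1 : (mz:ℝ) ≤ u + 1/2 := by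
      cases abs_le.mp hround with
      | intro hl hr => linarith
    linarith
  have hm2 : -(N:ℝ) < mz := by
    have h1 : u - 1/2 ≤ (mz:ℝ) := by
      cases abs_le.mp hround with
      | intro hl hr => linarith
    linarith
  rcases le_or_gt 0 mz with hmz | hmz
  · refine ⟨mz.toNat, ?_, β, hβ, ?_, ?_⟩
    · have hcast : ((mz.toNat : ℤ) : ℝ) = (mz:ℝ) := by rw [Int.toNat_of_nonneg hmz]
      have : ((mz.toNat : ℕ) : ℝ) < N := by push_cast at hcast ⊢; rw [hcast]; exact hm1
      exact_mod_cast this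
    all_goals
      have hcast : ((mz.toNat : ℕ) : ℝ) = (mz:ℝ) := by
        have := Int.toNat_of_nonneg hmz
        exact_mod_cast congrArg (fun n : ℤ => (n:ℝ)) this
      rw [hcast]
  · refine ⟨(mz + N).toNat, ?_, β, hβ, ?_, ?_⟩
    · have hnn : (0:ℤ) ≤ mz + N := by
        have : (-(N:ℝ)) < mz := hm2
        have : -(N:ℤ) < mz := by exact_mod_cast this
        omega
      have hcast : ((mz + N).toNat : ℝ) = (mz:ℝ) + N := by
        have := Int.toNat_of_nonneg hnn
        have h2 := congrArg (fun n : ℤ => (n:ℝ)) this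
        push_cast at h2 ⊢
        exact h2
      have hmzr : (mz:ℝ) < 0 := by exact_mod_cast hmz
      have : (((mz + N).toNat : ℕ) : ℝ) < N := by rw [hcast]; push_cast; linarith
      exact_mod_cast this
    all_goals
      have hnn : (0:ℤ) ≤ mz + N := by
        have : -(N:ℤ) < mz := by exact_mod_cast hm2
        omega
      have hcast : ((mz + N).toNat : ℝ) = (mz:ℝ) + N := by
        have := Int.toNat_of_nonneg hnn
        have h2 := congrArg (fun n : ℤ => (n:ℝ)) this
        push_cast at h2 ⊢
        exact h2
      have hangle : 2 * π * (((mz + N).toNat : ℕ) : ℝ) / N = β + 2 * π := by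
        rw [hcast, hβdef]
        field_simp
      rw [hangle]
    · exact Real.cos_add_two_pi β
    · exact Real.sin_add_two_pi β

lemma s_ne_P (L m : ℕ) (P Q : ℝ) (hm : 1 ≤ m) (hQ0 : 0 ≤ Q) (hQle : Q ≤ 4⁻¹)
    (hP1 : (141/100) * 2^m ≤ P) (hP2 : P ≤ (146/100) * 2^m) :
    ∀ k, k ≤ L → Real.sqrt (4^k - Q) ≠ P := by
  intro k _
  have hsub : (0:ℝ) < 4^k - Q := by
    have h1 : (1:ℝ) ≤ 4^k := one_le_pow₀ (by norm_num)
    linarith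
  have h4 : ((2:ℝ)^k)^2 = 4^k := by
    rw [← pow_mul, show (4:ℝ) = 2^2 by norm_num, ← pow_mul, Nat.mul_comm]
  rcases le_or_gt k m with hkm | hkm
  · apply ne_of_lt
    calc Real.sqrt (4^k - Q) ≤ Real.sqrt (4^k) := Real.sqrt_le_sqrt (by linarith)
    _ = 2^k := by rw [← h4, Real.sqrt_sq (by positivity)]
    _ ≤ 2^m := pow_le_pow_right₀ (by norm_num) hkm
    _ < P := by nlinarith [pow_pos (show (0:ℝ) < 2 by norm_num) m]
  · apply ne_of_gt
    have h2 : (2:ℝ)^(m+1) ≤ 2^k := pow_le_pow_right₀ (by norm_num) hkm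
    have h3 : (2:ℝ)^m ≥ 2 := by
      calc (2:ℝ)^m ≥ 2^1 := pow_le_pow_right₀ (by norm_num) hm
      _ = 2 := by norm_num
    have hge : (2:ℝ)^k - 1 ≤ Real.sqrt (4^k - Q) := by
      rw [Real.le_sqrt (by nlinarith [one_le_pow₀ (show (1:ℝ) ≤ 2 by norm_num) (n := k)]) hsub.le]
      nlinarith [one_le_pow₀ (show (1:ℝ) ≤ 2 by norm_num) (n := k)]
    have : (2:ℝ)^(m+1) = 2 * 2^m := by ring
    nlinarith

lemma region_pv_bound (N L m : ℕ) (C : ℝ) (hC : 0 < C) (hm : 1 ≤ m) (hmL : m ≤ L)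
    (hN : 2 ≤ N)
    (hNbig : (146/100) * 2^m * π ≤ (N:ℝ) * (1/2))
    (hNbig2 : (π/(N:ℝ))^2 ≤ 1/100)
    (x : P2) (hx1 : (142/100) * 2^m ≤ ‖x‖) (hx2 : ‖x‖ ≤ (146/100) * 2^m) :
    ENNReal.ofReal (C * ((m:ℝ)/(3 * 2^m))) ≤ TstarEq N (fun y => C * multiBall L y) x := by
  have h2m : (0:ℝ) < 2^m := by positivity
  have hxne : x ≠ 0 := by
    intro h
    rw [h, norm_zero] at hx1
    nlinarith
  have hNpos : (0:ℝ) < N := by positivity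
  obtain ⟨θ, hθ, hx0, hx1c⟩ := polar_P2 x hxne
  obtain ⟨j, hjN, β, hβ, hcosj, hsinj⟩ := exists_close_dir N hN θ hθ
  set R := ‖x‖ with hR
  have hRpos : 0 < R := by nlinarith
  set δ := θ - β with hδ
  have hδle : |δ| ≤ π/N := hβ
  set P := R * Real.cos δ with hPdef
  set Q := R^2 - P^2 with hQdef
  have hcos2 : Real.cos δ ^ 2 ≤ 1 := Real.cos_sq_le_one δ
  have hQ0 : 0 ≤ Q := by rw [hQdef, hPdef]; nlinarith
  have hsinsq : Q = (R * Real.sin δ)^2 := by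
    have h := Real.sin_sq_add_cos_sq δ
    rw [hQdef, hPdef]; nlinarith
  have hRsin : |R * Real.sin δ| ≤ 1/2 := by
    rw [abs_mul, abs_of_pos hRpos]
    have h1 : |Real.sin δ| ≤ π/N := (Real.abs_sin_le_abs).trans hδle
    have h2 : R * (π/N) ≤ 1/2 := by
      have h3 : R * (π/N) ≤ ((146/100) * 2^m) * (π/N) :=
        mul_le_mul_of_nonneg_right hx2 (by positivity)
      have h4 : ((146/100) * 2^m) * (π/N) = ((146/100) * 2^m * π)/N := by ring
      rw [h4] at h3
      have h5 : ((146/100) * 2^m * π)/N ≤ 1/2 := by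
        rw [div_le_iff₀ hNpos]
        linarith [hNbig]
      linarith
    calc R * |Real.sin δ| ≤ R * (π/N) := mul_le_mul_of_nonneg_left h1 hRpos.le
    _ ≤ 1/2 := h2
  have hQle : Q ≤ 4⁻¹ := by
    have h6 := mul_self_le_mul_self (abs_nonneg (R * Real.sin δ)) hRsin
    rw [abs_mul_abs_self] at h6
    rw [hsinsq]
    nlinarith
  have hδsq : δ^2 ≤ 1/100 := by
    have h1 : |δ|^2 ≤ (π/N)^2 := by
      apply pow_le_pow_left₀ (abs_nonneg δ) hδle
    rw [sq_abs] at h1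
    linarith
  have hcosge : (199/200 : ℝ) ≤ Real.cos δ := by
    have := Real.one_sub_sq_div_two_le_cos (x := δ)
    linarith
  have hP1 : (141/100) * 2^m ≤ P := by
    rw [hPdef]
    nlinarith
  have hP2 : P ≤ (146/100) * 2^m := by
    rw [hPdef]
    nlinarith [Real.cos_le_one δ]
  have hPpos : 0 < P := by nlinarith
  have hs := s_ne_P L m P Q hm hQ0 hQle hP1 hP2
  have hv0 : (dirN N j) 0 = Real.cos β := by
    rw [show (dirN N j) 0 = Real.cos (2 * π * j / N) from rfl]
    exact hcosj
  have hv1 : (dirN N j) 1 = Real.sin β := by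
    rw [show (dirN N j) 1 = Real.sin (2 * π * j / N) from rfl]
    exact hsinj
  have hnorm : ∀ t : ℝ, ‖x + t • dirN N j‖^2 = (t+P)^2 + Q := by
    intro t
    rw [norm_sq_P2]
    have ha0 : (x + t • dirN N j) 0 = x 0 + t * Real.cos β := by
      simp [PiLp.add_apply, PiLp.smul_apply, smul_eq_mul, hv0]
    have ha1 : (x + t • dirN N j) 1 = x 1 + t * Real.sin β := by
      simp [PiLp.add_apply, PiLp.smul_apply, smul_eq_mul, hv1]
    rw [ha0, ha1, hx0, hx1c, hQdef, hPdef, hδ, Real.cos_sub]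
    have h1 := Real.sin_sq_add_cos_sq θ
    have h2 := Real.sin_sq_add_cos_sq β
    linear_combination R^2 * h1 + t^2 * h2
  have hpv := pvDir_multiBall L C (dirN N j) x P Q hPpos hQ0 hQle hnorm hs
  have hsum := sum_log_bound L m P Q hm hmL hQ0 hQle hs hP1 hP2
  have habs : C * ((m:ℝ)/(3*2^m)) ≤ |pvDir (fun y => C * multiBall L y) (dirN N j) x| := by
    rw [hpv, abs_mul, abs_of_pos hC]
    exact mul_le_mul_of_nonneg_left hsum hC.le
  calc ENNReal.ofReal (C * ((m:ℝ)/(3 * 2^m)))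
      ≤ ENNReal.ofReal |pvDir (fun y => C * multiBall L y) (dirN N j) x| :=
        ENNReal.ofReal_le_ofReal habs
    _ ≤ TstarEq N (fun y => C * multiBall L y) x := by
        rw [TstarEq]
        exact le_iSup₂ (f := fun (j : ℕ) (_ : j ∈ Finset.range N) =>
          ENNReal.ofReal |pvDir (fun y => C * multiBall L y) (dirN N j) x|) j
          (Finset.mem_range.mpr hjN)

lemma smallcase_bound (N : ℕ) (hN : 2 ≤ N) (x : P2)
    (hx : x ∈ Metric.ball (vec2 (5/2) 0) (1/2)) :
    ENNReal.ofReal (1/10 : ℝ)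
      ≤ TstarEq N (fun y => (Real.sqrt (16*((0:ℕ)+1)))⁻¹ * multiBall 0 y) x := by
  have h4 : Real.sqrt (16*(((0:ℕ):ℝ)+1)) = 4 := by
    rw [show (16:ℝ)*(((0:ℕ):ℝ)+1) = 4^2 by norm_num, Real.sqrt_sq (by norm_num)]
  set C : ℝ := (Real.sqrt (16*(((0:ℕ):ℝ)+1)))⁻¹ with hCdef
  have hC : C = 1/4 := by rw [hCdef, h4]; norm_num
  have hCpos : 0 < C := by rw [hC]; norm_num
  rw [mem_ball, dist_eq_norm] at hx
  have h0 := (coord_le_norm (x - vec2 (5/2) 0) 0).trans_lt hx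
  have h1 := (coord_le_norm (x - vec2 (5/2) 0) 1).trans_lt hx
  have hsub0 : (x - vec2 (5/2) 0) 0 = x 0 - 5/2 := rfl
  have hsub1 : (x - vec2 (5/2) 0) 1 = x 1 - 0 := rfl
  rw [hsub0] at h0
  rw [hsub1] at h1
  have hx0a : 2 < x 0 := by cases abs_lt.mp h0 with | intro hl hr => linarith
  have hx0b : x 0 < 3 := by cases abs_lt.mp h0 with | intro hl hr => linarith
  have hx1a : |x 1| < 1/2 := by rw [show x 1 = x 1 - 0 by ring]; exact h1
  set P := x 0 with hPdef
  set Q := (x 1)^2 with hQdef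
  have hPpos : 0 < P := by linarith
  have hQ0 : 0 ≤ Q := sq_nonneg _
  have hQle : Q ≤ 4⁻¹ := by
    have h6 := mul_self_le_mul_self (abs_nonneg (x 1)) hx1a.le
    rw [abs_mul_abs_self] at h6
    rw [hQdef]
    nlinarith
  set s := Real.sqrt (4^(0:ℕ) - Q) with hsdef
  have hs1 : s ≤ 1 := by
    rw [hsdef]
    calc Real.sqrt (4^(0:ℕ) - Q) ≤ Real.sqrt 1 := Real.sqrt_le_sqrt (by norm_num; linarith)
    _ = 1 := Real.sqrt_one
  have hsge : (86/100 : ℝ) ≤ s := by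
    rw [hsdef, Real.le_sqrt (by norm_num) (by norm_num; linarith)]
    norm_num
    linarith
  have hspos : 0 < s := by linarith
  have hsP : s < P := by linarith
  have hs_ne : ∀ k, k ≤ 0 → Real.sqrt (4^k - Q) ≠ P := by
    intro k hk
    have : k = 0 := Nat.le_zero.mp hk
    subst this
    rw [← hsdef]
    exact ne_of_lt hsP
  have hv0 : (dirN N 0) 0 = 1 := by
    rw [show (dirN N 0) 0 = Real.cos (2 * π * ((0:ℕ):ℝ) / N) from rfl]
    norm_num
  have hv1 : (dirN N 0) 1 = 0 := by
    rw [show (dirN N 0) 1 = Real.sin (2 * π * ((0:ℕ):ℝ) / N) from rfl]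
    norm_num
  have hnorm : ∀ t : ℝ, ‖x + t • dirN N 0‖^2 = (t+P)^2 + Q := by
    intro t
    rw [norm_sq_P2]
    have ha0 : (x + t • dirN N 0) 0 = x 0 + t * 1 := by
      simp [PiLp.add_apply, PiLp.smul_apply, smul_eq_mul, hv0]
    have ha1 : (x + t • dirN N 0) 1 = x 1 + t * 0 := by
      simp [PiLp.add_apply, PiLp.smul_apply, smul_eq_mul, hv1]
    rw [ha0, ha1, hPdef, hQdef]
    ring
  have hpv := pvDir_multiBall 0 C (dirN N 0) x P Q hPpos hQ0 hQle hnorm hs_ne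
  rw [Finset.sum_range_one, pow_zero, one_mul, ← hsdef] at hpv
  have habs2 : |s - P| = P - s := by rw [abs_of_neg (by linarith)]; ring
  rw [habs2, show s + P = P + s by ring] at hpv
  have hlog := log_ratio_ge hspos hsP
  have hdiv : (43/100 : ℝ) ≤ 2*s/(P+s) := by
    rw [le_div_iff₀ (by linarith)]
    nlinarith
  have habs : (1/10 : ℝ) ≤ |pvDir (fun y => C * multiBall 0 y) (dirN N 0) x| := by
    rw [hpv, abs_mul, abs_of_pos hCpos, hC]
    have : |Real.log (P - s) - Real.log (P + s)| = Real.log (P+s) - Real.log (P-s) := by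
      rw [abs_of_nonpos (by linarith)]
      ring
    rw [this]
    nlinarith
  calc ENNReal.ofReal (1/10 : ℝ)
      ≤ ENNReal.ofReal |pvDir (fun y => C * multiBall 0 y) (dirN N 0) x| :=
        ENNReal.ofReal_le_ofReal habs
    _ ≤ TstarEq N (fun y => C * multiBall 0 y) x := by
        rw [TstarEq]
        exact le_iSup₂ (f := fun (j : ℕ) (_ : j ∈ Finset.range N) =>
          ENNReal.ofReal |pvDir (fun y => C * multiBall 0 y) (dirN N j) x|) 0
          (Finset.mem_range.mpr (by omega))

def annul (m : ℕ) : Set P2 := {y | (142/100) * 2^m ≤ ‖y‖ ∧ ‖y‖ ≤ (146/100) * 2^m}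

lemma annul_measurable (m : ℕ) : MeasurableSet (annul m) := by
  have : annul m = (fun y : P2 => ‖y‖) ⁻¹' (Set.Icc ((142/100) * 2^m) ((146/100) * 2^m)) := rfl
  rw [this]
  exact measurable_norm measurableSet_Icc

lemma annul_volume (m : ℕ) :
    ENNReal.ofReal ((34/100) * 4^m) ≤ volume (annul m) := by
  have h2m : (0:ℝ) < 2^m := by positivity
  have hab : (142/100) * (2:ℝ)^m ≤ (146/100) * 2^m := by nlinarith
  have hsub : Metric.ball (0:P2) ((146/100)*2^m) \ Metric.ball 0 ((142/100)*2^m) ⊆ annul m := by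
    intro y hy
    constructor
    · by_contra h
      push_neg at h
      exact hy.2 (mem_ball_zero_iff.mpr h)
    · exact le_of_lt (mem_ball_zero_iff.mp hy.1)
  have hfin : volume (Metric.ball (0:P2) ((142/100)*2^m)) ≠ ⊤ := by
    rw [volume_ball_P2]
    exact ENNReal.mul_ne_top (ENNReal.pow_ne_top ENNReal.ofReal_ne_top) ENNReal.ofReal_ne_top
  have hdiff : volume (Metric.ball (0:P2) ((146/100)*2^m) \ Metric.ball 0 ((142/100)*2^m))
      = volume (Metric.ball (0:P2) ((146/100)*2^m)) - volume (Metric.ball (0:P2) ((142/100)*2^m)) :=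
    measure_diff (Metric.ball_subset_ball hab) measurableSet_ball.nullMeasurableSet hfin
  calc ENNReal.ofReal ((34/100) * 4^m)
      ≤ volume (Metric.ball (0:P2) ((146/100)*2^m) \ Metric.ball 0 ((142/100)*2^m)) := by
        rw [hdiff, volume_ball_P2, volume_ball_P2,
          ← ENNReal.ofReal_pow (by positivity), ← ENNReal.ofReal_pow (by positivity),
          ← ENNReal.ofReal_mul (by positivity), ← ENNReal.ofReal_mul (by positivity),
          ← ENNReal.ofReal_sub _ (by positivity)]
        apply ENNReal.ofReal_le_ofReal
        have h4 : ((2:ℝ)^m)^2 = 4^m := by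
          rw [← pow_mul, show (4:ℝ) = 2^2 by norm_num, ← pow_mul, Nat.mul_comm]
        nlinarith [Real.pi_gt_three, pow_pos (show (0:ℝ)<4 by norm_num) m]
    _ ≤ volume (annul m) := measure_mono hsub

lemma rpow_half_le {a b : ℝ} (ha : 0 ≤ a) (hab : a^2 ≤ b) (I : ℝ≥0∞)
    (hI : ENNReal.ofReal b ≤ I) :
    ENNReal.ofReal a ≤ I ^ (1/2 : ℝ) := by
  have hb : 0 ≤ b := le_trans (sq_nonneg a) hab
  have h1 : ENNReal.ofReal b ^ (1/2:ℝ) ≤ I ^ (1/2:ℝ) := ENNReal.rpow_le_rpow hI (by norm_num)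
  refine le_trans ?_ h1
  rw [ENNReal.ofReal_rpow_of_nonneg hb (by norm_num)]
  apply ENNReal.ofReal_le_ofReal
  rw [← Real.sqrt_eq_rpow]
  exact (Real.le_sqrt ha hb).mpr hab

/-- **Optimality (Proposition 3.5 of the paper).** For the `N` equidistributed unit
directions, the operator norm on `L²(ℝ²)` of the maximal directional Hilbert transform
is at least `c log N` for an absolute constant `c > 0`: there is a function `f` with
`‖f‖₂ ≤ 1` and `‖T_N^* f‖₂ ≥ c log N`. -/
theorem maximal_directional_hilbert_lower_bound :
    ∃ c : ℝ, 0 < c ∧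
      ∀ (N : ℕ), 2 ≤ N →
        ∃ f : P2 → ℝ, MemLp f 2 volume ∧ eLpNorm f 2 volume ≤ 1 ∧
          ENNReal.ofReal (c * Real.log N) ≤
            (∫⁻ x : P2, TstarEq N f x ^ 2 ∂volume) ^ (1/2 : ℝ) := by
  refine ⟨1/1000, by norm_num, ?_⟩
  intro N hN
  have hN1 : (1:ℝ) ≤ N := by exact_mod_cast Nat.one_le_of_lt hN
  have hlogN0 : 0 ≤ Real.log N := Real.log_nonneg hN1
  by_cases hbig : N < 2^64
  · -- small case
    refine ⟨fun y => (Real.sqrt (16*(((0:ℕ):ℝ)+1)))⁻¹ * multiBall 0 y,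
      memℒp_multiBall 0 _, eLpNorm_multiBall 0, ?_⟩
    set f := fun y => (Real.sqrt (16*(((0:ℕ):ℝ)+1)))⁻¹ * multiBall 0 y with hf
    have hpt : ∀ y : P2,
        (Metric.ball (vec2 (5/2) 0) (1/2)).indicator (fun _ => ENNReal.ofReal ((1/10:ℝ)^2)) y
          ≤ (TstarEq N f y)^2 := by
      intro y
      by_cases h : y ∈ Metric.ball (vec2 (5/2) 0) (1/2)
      · rw [Set.indicator_of_mem h]
        have hb := smallcase_bound N hN y h
        calc ENNReal.ofReal ((1/10:ℝ)^2) = (ENNReal.ofReal (1/10:ℝ))^2 :=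
            ENNReal.ofReal_pow (by norm_num) 2
          _ ≤ (TstarEq N f y)^2 := pow_le_pow_left' hb 2
      · rw [Set.indicator_of_notMem h]
        exact zero_le
    have hint : ENNReal.ofReal (3/400 : ℝ) ≤ ∫⁻ y : P2, (TstarEq N f y)^2 ∂volume := by
      calc ENNReal.ofReal (3/400 : ℝ)
          ≤ ENNReal.ofReal ((1/10:ℝ)^2) * volume (Metric.ball (vec2 (5/2) 0) (1/2)) := by
            rw [volume_ball_P2, ← ENNReal.ofReal_pow (by norm_num),
              ← ENNReal.ofReal_mul (by norm_num), ← ENNReal.ofReal_mul (by norm_num)]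
            apply ENNReal.ofReal_le_ofReal
            nlinarith [Real.pi_gt_three]
        _ = ∫⁻ y : P2, (Metric.ball (vec2 (5/2) 0) (1/2)).indicator
              (fun _ => ENNReal.ofReal ((1/10:ℝ)^2)) y ∂volume :=
            (lintegral_indicator_const measurableSet_ball _).symm
        _ ≤ ∫⁻ y : P2, (TstarEq N f y)^2 ∂volume := lintegral_mono hpt
    apply rpow_half_le (by positivity) _ _ hint
    have hlogle : Real.log N ≤ 64 * Real.log 2 := by
      have h1 : (N:ℝ) ≤ (2:ℝ)^64 := by exact_mod_cast Nat.le_of_lt hbig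
      have h2 : Real.log N ≤ Real.log ((2:ℝ)^64) := Real.log_le_log (by linarith) h1
      rw [Real.log_pow] at h2
      calc Real.log N ≤ ((64:ℕ):ℝ) * Real.log 2 := h2
      _ = 64 * Real.log 2 := by norm_num
    have h3 : Real.log N ≤ 45 := by nlinarith [Real.log_two_lt_d9]
    nlinarith [mul_self_le_mul_self hlogN0 h3]
  · -- big case
    push_neg at hbig
    set Mn := Nat.log 2 N - 4 with hMndef
    have hlog64 : 64 ≤ Nat.log 2 N := by
      rw [Nat.le_log_iff_pow_le (by norm_num) (by omega)]
      exact hbig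
    have hM4 : Mn + 4 = Nat.log 2 N := by omega
    have hM60 : 60 ≤ Mn := by omega
    have hM60R : (60:ℝ) ≤ Mn := by exact_mod_cast hM60
    have h2M : 2^(Mn+4) ≤ N := by rw [hM4]; exact Nat.pow_log_le_self 2 (by omega)
    have hNlt : N < 2^(Mn+5) := by
      have h := Nat.lt_pow_succ_log_self (by norm_num : 1 < 2) N
      rwa [← hM4] at h
    have h2MR : (2:ℝ)^(Mn+4) ≤ N := by exact_mod_cast h2M
    have hNltR : (N:ℝ) < 2^(Mn+5) := by exact_mod_cast hNlt
    have hNposR : (0:ℝ) < N := by linarith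
    have hN64R : (64:ℝ) ≤ N := by
      calc (64:ℝ) = 2^6 := by norm_num
      _ ≤ 2^(Mn+4) := pow_le_pow_right₀ (by norm_num) (by omega)
      _ ≤ N := h2MR
    set C : ℝ := (Real.sqrt (16*((Mn:ℝ)+1)))⁻¹ with hCdef
    have hCpos : 0 < C := by rw [hCdef]; positivity
    have hC2 : C^2 = (16*((Mn:ℝ)+1))⁻¹ := by
      rw [hCdef, ← Real.sqrt_inv, Real.sq_sqrt (by positivity)]
    refine ⟨fun y => C * multiBall Mn y, memℒp_multiBall Mn C, eLpNorm_multiBall Mn, ?_⟩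
    set f := fun y => C * multiBall Mn y with hf
    set m₁ := Mn/2 with hm₁def
    have hm₁Mn : m₁ ≤ Mn := Nat.div_le_self Mn 2
    have hregion : ∀ m ∈ Finset.Icc m₁ Mn, ∀ y ∈ annul m,
        ENNReal.ofReal (C * ((m:ℝ)/(3*2^m))) ≤ TstarEq N f y := by
      intro m hm y hy
      obtain ⟨hmlo, hmhi⟩ := Finset.mem_Icc.mp hm
      have hm1 : 1 ≤ m := by omega
      have h2mM : (2:ℝ)^m ≤ 2^Mn := pow_le_pow_right₀ (by norm_num) hmhi
      have h16 : (2:ℝ)^Mn * 16 ≤ N := by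
        have he : (2:ℝ)^(Mn+4) = 2^Mn * 16 := by ring
        linarith [he ▸ h2MR]
      apply region_pv_bound N Mn m C hCpos hm1 hmhi (by omega)
      · nlinarith [Real.pi_lt_d2, Real.pi_pos, pow_pos (show (0:ℝ)<2 by norm_num) m,
          pow_pos (show (0:ℝ)<2 by norm_num) Mn]
      · have hq : π/(N:ℝ) ≤ 1/10 := by
          rw [div_le_div_iff₀ hNposR (by norm_num)]
          nlinarith [Real.pi_lt_d2]
        have hq0 : 0 ≤ π/(N:ℝ) := by positivity
        nlinarith
      · exact hy.1
      · exact hy.2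
    set cst : ℕ → ℝ≥0∞ := fun m => ENNReal.ofReal ((C * ((m:ℝ)/(3*2^m)))^2) with hcst
    have hpt : ∀ y : P2,
        (∑ m ∈ Finset.Icc m₁ Mn, (annul m).indicator (fun _ => cst m) y) ≤ (TstarEq N f y)^2 := by
      intro y
      by_cases hy : ∃ m ∈ Finset.Icc m₁ Mn, y ∈ annul m
      · obtain ⟨m, hmI, hym⟩ := hy
        have hz : ∀ b ∈ Finset.Icc m₁ Mn, b ≠ m → (annul b).indicator (fun _ => cst b) y = 0 := by
          intro b _ hbm
          rw [Set.indicator_of_notMem]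
          intro hyb
          rcases lt_or_gt_of_ne hbm with h | h
          · have h1 : (2:ℝ)^(b+1) ≤ 2^m := pow_le_pow_right₀ (by norm_num) h
            have h2 := hyb.2
            have h3 := hym.1
            have h4 : (2:ℝ)^(b+1) = 2 * 2^b := by ring
            nlinarith [pow_pos (show (0:ℝ)<2 by norm_num) b]
          · have h1 : (2:ℝ)^(m+1) ≤ 2^b := pow_le_pow_right₀ (by norm_num) h
            have h2 := hyb.1
            have h3 := hym.2
            have h4 : (2:ℝ)^(m+1) = 2 * 2^m := by ring
            nlinarith [pow_pos (show (0:ℝ)<2 by norm_num) m]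
        rw [Finset.sum_eq_single_of_mem m hmI hz, Set.indicator_of_mem hym]
        have hreg := hregion m hmI y hym
        calc cst m = (ENNReal.ofReal (C * ((m:ℝ)/(3*2^m))))^2 :=
            ENNReal.ofReal_pow (show (0:ℝ) ≤ C * ((m:ℝ)/(3*2^m)) by positivity) 2
          _ ≤ (TstarEq N f y)^2 := pow_le_pow_left' hreg 2
      · push_neg at hy
        rw [Finset.sum_eq_zero (fun m hm => by rw [Set.indicator_of_notMem (hy m hm)])]
        exact zero_le
    have hsum_ge : (Mn:ℝ)^3/27 ≤ ∑ m ∈ Finset.Icc m₁ Mn, (m:ℝ)^2 := by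
      have hcard : (Finset.Icc m₁ Mn).card = Mn + 1 - m₁ := Nat.card_Icc m₁ Mn
      have hc3 : Mn ≤ 3*(Mn + 1 - m₁) := by omega
      have hm3 : Mn ≤ 3*m₁ := by omega
      have hc3R : (Mn:ℝ) ≤ 3*((Mn + 1 - m₁ : ℕ):ℝ) := by exact_mod_cast hc3
      have hm3R : (Mn:ℝ) ≤ 3*((m₁:ℕ):ℝ) := by exact_mod_cast hm3
      have ha0 : (0:ℝ) ≤ ((Mn + 1 - m₁ : ℕ):ℝ) := Nat.cast_nonneg _
      have hb0 : (0:ℝ) ≤ ((m₁:ℕ):ℝ) := Nat.cast_nonneg _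
      have hMn0 : (0:ℝ) ≤ (Mn:ℝ) := Nat.cast_nonneg _
      have h1 : (Mn:ℝ)*Mn ≤ (3*((m₁:ℕ):ℝ))*(3*((m₁:ℕ):ℝ)) :=
        mul_le_mul hm3R hm3R hMn0 (by positivity)
      have h2 : (Mn:ℝ)*((Mn:ℝ)*Mn) ≤ (3*((Mn + 1 - m₁ : ℕ):ℝ))*((3*((m₁:ℕ):ℝ))*(3*((m₁:ℕ):ℝ))) :=
        mul_le_mul hc3R h1 (by positivity) (by positivity)
      have hfirst : (Mn:ℝ)^3/27 ≤ ((Mn + 1 - m₁ : ℕ):ℝ) * ((m₁:ℕ):ℝ)^2 := by nlinarith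
      refine hfirst.trans ?_
      have hle := Finset.card_nsmul_le_sum (Finset.Icc m₁ Mn) (fun m => (m:ℝ)^2) (((m₁:ℕ):ℝ)^2)
        (fun i hi => by
          have hr : ((m₁:ℕ):ℝ) ≤ (i:ℝ) := by exact_mod_cast (Finset.mem_Icc.mp hi).1
          simpa using pow_le_pow_left₀ (Nat.cast_nonneg m₁) hr 2)
      rw [hcard, nsmul_eq_mul] at hle
      exact_mod_cast hle
    have hperm : ∀ m ∈ Finset.Icc m₁ Mn,
        ENNReal.ofReal (C^2*(m:ℝ)^2/27) ≤ cst m * volume (annul m) := by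
      intro m _
      calc ENNReal.ofReal (C^2*(m:ℝ)^2/27)
          ≤ ENNReal.ofReal ((C * ((m:ℝ)/(3*2^m)))^2 * ((34/100) * 4^m)) := by
            apply ENNReal.ofReal_le_ofReal
            have h4 : ((2:ℝ)^m)^2 = 4^m := by
              rw [← pow_mul, show (4:ℝ) = 2^2 by norm_num, ← pow_mul, Nat.mul_comm]
            have h2m : (0:ℝ) < 2^m := by positivity
            have he : (C * ((m:ℝ)/(3*2^m)))^2 * ((34/100) * 4^m)
                = C^2*(m:ℝ)^2*(34/900) * (4^m / ((2^m)^2)) := by ring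
            rw [he, h4, div_self (by positivity), mul_one]
            nlinarith [sq_nonneg (C*(m:ℝ))]
        _ = ENNReal.ofReal ((C * ((m:ℝ)/(3*2^m)))^2) * ENNReal.ofReal ((34/100) * 4^m) :=
            ENNReal.ofReal_mul (by positivity)
        _ ≤ cst m * volume (annul m) := mul_le_mul_right (annul_volume m) _
    have hchain : ENNReal.ofReal (C^2*(Mn:ℝ)^3/729)
        ≤ ∫⁻ y : P2, (TstarEq N f y)^2 ∂volume := by
      calc ENNReal.ofReal (C^2*(Mn:ℝ)^3/729)
          ≤ ENNReal.ofReal (∑ m ∈ Finset.Icc m₁ Mn, C^2*(m:ℝ)^2/27) := by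
            apply ENNReal.ofReal_le_ofReal
            calc C^2*(Mn:ℝ)^3/729 = (C^2/27)*((Mn:ℝ)^3/27) := by ring
              _ ≤ (C^2/27)*(∑ m ∈ Finset.Icc m₁ Mn, (m:ℝ)^2) :=
                  mul_le_mul_of_nonneg_left hsum_ge (by positivity)
              _ = ∑ m ∈ Finset.Icc m₁ Mn, C^2*(m:ℝ)^2/27 := by
                  rw [Finset.mul_sum]
                  exact Finset.sum_congr rfl fun m _ => by ring
        _ = ∑ m ∈ Finset.Icc m₁ Mn, ENNReal.ofReal (C^2*(m:ℝ)^2/27) :=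
            ENNReal.ofReal_sum_of_nonneg (fun m _ => by positivity)
        _ ≤ ∑ m ∈ Finset.Icc m₁ Mn, cst m * volume (annul m) := Finset.sum_le_sum hperm
        _ = ∑ m ∈ Finset.Icc m₁ Mn, ∫⁻ y : P2, (annul m).indicator (fun _ => cst m) y ∂volume :=
            Finset.sum_congr rfl fun m _ => (lintegral_indicator_const (annul_measurable m) _).symm
        _ = ∫⁻ y : P2, ∑ m ∈ Finset.Icc m₁ Mn, (annul m).indicator (fun _ => cst m) y ∂volume :=
            (lintegral_finset_sum _ (fun m _ => measurable_const.indicator (annul_measurable m))).symm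
        _ ≤ ∫⁻ y : P2, (TstarEq N f y)^2 ∂volume := lintegral_mono hpt
    apply rpow_half_le (by positivity) _ _ hchain
    -- (1/1000 log N)^2 ≤ C^2 Mn^3 / 729
    have ha : Real.log N ≤ (76/100)*(Mn:ℝ) := by
      have h1 : Real.log N ≤ Real.log ((2:ℝ)^(Mn+5)) := Real.log_le_log hNposR hNltR.le
      rw [Real.log_pow] at h1
      have h2 := Real.log_two_lt_d9
      have h3 := Real.log_pos (by norm_num : (1:ℝ) < 2)
      have h4 : ((Mn+5 : ℕ):ℝ) = (Mn:ℝ) + 5 := by push_cast; ring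
      rw [h4] at h1
      nlinarith
    have heq : C^2*(Mn:ℝ)^3/729 = (Mn:ℝ)^3/(729*(16*((Mn:ℝ)+1))) := by
      rw [hC2]; field_simp
    rw [heq, le_div_iff₀ (by positivity)]
    have hsq := mul_self_le_mul_self hlogN0 ha
    nlinarith [hsq, hM60R, sq_nonneg ((Mn:ℝ))]
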